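/- Let p be a prime and k ≥ 1. Let G be the group generated by x, y subject to the relations x^p = y^p = 1, [x^{(i)}, y]^p = 1 for 1 ≤ i ≤ k, [[x^{(i)}, y], y] = 1 for 1 ≤ i ≤ k, and [x^{(k+1)}, y] = 1. Then |G| ≤ p^{k+2}. -/

import Mathlib

open scoped commutatorElement

/-- Iterated commutator in a group: `[x⁽⁰⁾,y] = y`, `[x⁽ⁱ⁾,y] = [x,[x⁽ⁱ⁻¹⁾,y]]`. -/
def iterComm {G : Type*} [Group G] (x y : G) : ℕ → G
  | 0 => y
  | n + 1 => ⁅x, iterComm x y n⁆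

/-- Relators: x^p, y^p, [x⁽ⁱ⁾,y]^p and [[x⁽ⁱ⁾,y],y] for 1 ≤ i ≤ k, and [x⁽ᵏ⁺¹⁾,y],
where `true` corresponds to x and `false` to y. -/
def sharifiRels (p k : ℕ) : Set (FreeGroup Bool) :=
  { FreeGroup.of true ^ p, FreeGroup.of false ^ p,
    iterComm (FreeGroup.of true) (FreeGroup.of false) (k + 1) } ∪
  { w | ∃ i, 1 ≤ i ∧ i ≤ k ∧
      (w = iterComm (FreeGroup.of true) (FreeGroup.of false) i ^ p ∨
       w = ⁅iterComm (FreeGroup.of true) (FreeGroup.of false) i, FreeGroup.of false⁆) }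

section SharifiAux

variable {G : Type*} [Group G]

lemma map_iterComm {H : Type*} [Group H] (f : G →* H) (x y : G) :
    ∀ n, f (iterComm x y n) = iterComm (f x) (f y) n
  | 0 => rfl
  | n + 1 => by
    rw [iterComm, map_commutatorElement, map_iterComm f x y n]; rfl

/-- ordered product `c 0 ^ b 0 * ⋯ * c (n-1) ^ b (n-1)`. -/
def sharW (c : ℕ → G) (b : ℕ → ℕ) : ℕ → G
  | 0 => 1
  | n + 1 => sharW c b n * c n ^ b n

lemma sharW_commute {c : ℕ → G} {a : G} (h : ∀ i, Commute a (c i)) (b : ℕ → ℕ) :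
    ∀ n, Commute a (sharW c b n)
  | 0 => Commute.one_right a
  | n + 1 => Commute.mul_right (sharW_commute h b n) ((h n).pow_right _)

lemma sharW_congr {c : ℕ → G} {b b' : ℕ → ℕ} :
    ∀ n, (∀ i, i < n → b i = b' i) → sharW c b n = sharW c b' n
  | 0, _ => rfl
  | n + 1, h => by
    rw [sharW, sharW, sharW_congr n (fun i hi => h i (by omega)), h n (by omega)]

lemma sharW_zero (c : ℕ → G) : ∀ n, sharW c (fun _ => 0) n = 1
  | 0 => rfl
  | n + 1 => by rw [sharW, sharW_zero c n, pow_zero, mul_one]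

lemma sharW_delta (c : ℕ → G) :
    ∀ n, sharW c (fun i => if i = 0 then 1 else 0) (n + 1) = c 0
  | 0 => by simp [sharW]
  | n + 1 => by rw [sharW, sharW_delta c n]; simp

lemma sharW_mul {c : ℕ → G} (hcomm : ∀ m n, Commute (c m) (c n)) (b b' : ℕ → ℕ) :
    ∀ n, sharW c b n * sharW c b' n = sharW c (fun i => b i + b' i) n
  | 0 => by simp [sharW]
  | n + 1 => by
    have h1 : Commute (c n ^ b n) (sharW c b' n) :=
      (sharW_commute (fun i => (hcomm n i).pow_left _) b' n)
    calc sharW c b n * c n ^ b n * (sharW c b' n * c n ^ b' n)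
        = sharW c b n * (c n ^ b n * sharW c b' n) * c n ^ b' n := by group
      _ = sharW c b n * (sharW c b' n * c n ^ b n) * c n ^ b' n := by rw [h1.eq]
      _ = (sharW c b n * sharW c b' n) * (c n ^ b n * c n ^ b' n) := by group
      _ = sharW c (fun i => b i + b' i) n * c n ^ (b n + b' n) := by
          rw [sharW_mul hcomm b b' n, pow_add]

lemma sharW_mod {c : ℕ → G} {p : ℕ} (hc : ∀ i, c i ^ p = 1) (b : ℕ → ℕ) :
    ∀ n, sharW c b n = sharW c (fun i => b i % p) n
  | 0 => rfl
  | n + 1 => by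
    rw [sharW, sharW, sharW_mod hc b n, pow_eq_pow_mod _ (hc n)]

/-- the exponent transfer map for conjugation by `x`. -/
def sharT (b : ℕ → ℕ) : ℕ → ℕ
  | 0 => b 0
  | (j + 1) => b (j + 1) + b j

lemma sharW_conj {c : ℕ → G} {x : G} (hconj : ∀ i, x * c i * x⁻¹ = c (i + 1) * c i)
    (hcomm : ∀ m n, Commute (c m) (c n)) (b : ℕ → ℕ) :
    ∀ n, x * sharW c b (n + 1) * x⁻¹ = sharW c (sharT b) (n + 1) * c (n + 1) ^ b n
  | 0 => by
    simp only [sharW, sharT, one_mul]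
    rw [← conj_pow, hconj 0, (hcomm 1 0).mul_pow, ((hcomm 1 0).pow_pow _ _).eq]
  | n + 1 => by
    have step : x * sharW c b (n + 2) * x⁻¹ =
        (x * sharW c b (n + 1) * x⁻¹) * (x * c (n + 1) ^ b (n + 1) * x⁻¹) := by
      simp only [sharW]; group
    rw [step, sharW_conj hconj hcomm b n, ← conj_pow, hconj (n + 1),
      (hcomm (n + 2) (n + 1)).mul_pow]
    have hsw : c (n + 2) ^ b (n + 1) * c (n + 1) ^ b (n + 1)
        = c (n + 1) ^ b (n + 1) * c (n + 2) ^ b (n + 1) :=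
      ((hcomm (n + 2) (n + 1)).pow_pow _ _).eq
    calc sharW c (sharT b) (n + 1) * c (n + 1) ^ b n *
          (c (n + 2) ^ b (n + 1) * c (n + 1) ^ b (n + 1))
        = sharW c (sharT b) (n + 1) * c (n + 1) ^ b n *
          (c (n + 1) ^ b (n + 1) * c (n + 2) ^ b (n + 1)) := by rw [hsw]
      _ = sharW c (sharT b) (n + 1) * (c (n + 1) ^ b n * c (n + 1) ^ b (n + 1)) *
          c (n + 2) ^ b (n + 1) := by group
      _ = sharW c (sharT b) (n + 1) * c (n + 1) ^ (b n + b (n + 1)) *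
          c (n + 2) ^ b (n + 1) := by rw [← pow_add]
      _ = sharW c (sharT b) (n + 2) * c (n + 2) ^ b (n + 1) := by
          simp only [sharW, sharT]
          rw [Nat.add_comm (b n) (b (n + 1))]

theorem sharifi_card_le (p k : ℕ) (hp : 0 < p) (x y : G) (c : ℕ → G)
    (hc0 : c 0 = y) (hcs : ∀ n, c (n + 1) = ⁅x, c n⁆)
    (hxp : x ^ p = 1) (hyp : y ^ p = 1)
    (hcip : ∀ i, 1 ≤ i → i ≤ k → c i ^ p = 1)
    (hciy : ∀ i, 1 ≤ i → i ≤ k → ⁅c i, y⁆ = 1)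
    (hck : c (k + 1) = 1)
    (hgen : ∀ g : G, ∀ K : Submonoid G, x ∈ K → y ∈ K → x⁻¹ ∈ K → y⁻¹ ∈ K → g ∈ K) :
    Nat.card G ≤ p ^ (k + 2) := by
  -- all high iterated commutators vanish
  have htopj : ∀ j, c (k + 1 + j) = 1 := by
    intro j
    induction j with
    | zero => exact hck
    | succ j ih =>
      rw [show k + 1 + (j + 1) = (k + 1 + j) + 1 by omega, hcs, ih,
        commutatorElement_one_right]
  have htop : ∀ n, k + 1 ≤ n → c n = 1 := by
    intro n hn
    obtain ⟨j, rfl⟩ := Nat.exists_eq_add_of_le hn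
    exact htopj j
  have hcp : ∀ n, c n ^ p = 1 := by
    intro n
    rcases Nat.eq_zero_or_pos n with h0 | h1
    · rw [h0, hc0]; exact hyp
    · by_cases hle : n ≤ k
      · exact hcip n h1 hle
      · rw [htop n (by omega), one_pow]
  have hconj : ∀ n, x * c n * x⁻¹ = c (n + 1) * c n := by
    intro n
    rw [hcs n, commutatorElement_def]
    group
  -- the key commutation lemma
  have hcomm0 : ∀ n m, Commute (c m) (c n) := by
    intro n
    induction n with
    | zero =>
      intro m
      rcases Nat.eq_zero_or_pos m with h0 | h1
      · rw [h0]
      · by_cases hle : m ≤ k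
        · have := commutatorElement_eq_one_iff_commute.mp (hciy m h1 hle)
          rwa [hc0]
        · rw [htop m (by omega)]; exact Commute.one_left _
    | succ n IH =>
      have aux : ∀ j m, k + 1 ≤ m + j → Commute (c m) (c (n + 1)) := by
        intro j
        induction j with
        | zero =>
          intro m hm
          rw [htop m (by omega)]
          exact Commute.one_left _
        | succ j ihj =>
          intro m hm
          by_cases h : k + 1 ≤ m + j
          · exact ihj m h
          · have hAU : Commute (c (m + 1)) (c (n + 1)) := ihj (m + 1) (by omega)
            have hAV : Commute (c (m + 1)) (c n) := IH (m + 1)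
            have hBV : Commute (c m) (c n) := IH m
            have e1 : (c (m + 1) * c m) * (c (n + 1) * c n) =
                (c (n + 1) * c n) * (c (m + 1) * c m) := by
              calc (c (m + 1) * c m) * (c (n + 1) * c n)
                  = (x * c m * x⁻¹) * (x * c n * x⁻¹) := by rw [hconj m, hconj n]
                _ = x * (c m * c n) * x⁻¹ := by group
                _ = x * (c n * c m) * x⁻¹ := by rw [hBV.eq]
                _ = (x * c n * x⁻¹) * (x * c m * x⁻¹) := by group
                _ = _ := by rw [hconj m, hconj n]
            have e2 : c (m + 1) * (c m * c (n + 1)) * c n =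
                c (m + 1) * (c (n + 1) * c m) * c n := by
              calc c (m + 1) * (c m * c (n + 1)) * c n
                  = (c (m + 1) * c m) * (c (n + 1) * c n) := by group
                _ = (c (n + 1) * c n) * (c (m + 1) * c m) := e1
                _ = c (n + 1) * (c n * c (m + 1)) * c m := by group
                _ = c (n + 1) * (c (m + 1) * c n) * c m := by rw [← hAV.eq]
                _ = (c (n + 1) * c (m + 1)) * (c n * c m) := by group
                _ = (c (n + 1) * c (m + 1)) * (c m * c n) := by rw [← hBV.eq]
                _ = (c (m + 1) * c (n + 1)) * (c m * c n) := by rw [← hAU.eq]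
                _ = c (m + 1) * (c (n + 1) * c m) * c n := by group
            have e3 := mul_left_cancel (mul_right_cancel e2)
            exact e3
      intro m
      exact aux (k + 1) m (by omega)
  have hcomm : ∀ m n, Commute (c m) (c n) := fun m n => hcomm0 n m
  -- inverse powers
  have hxinv : x⁻¹ = x ^ (p - 1) := by
    have h : x ^ (p - 1) * x = 1 := by
      rw [← pow_succ, Nat.sub_add_cancel hp, hxp]
    exact inv_eq_of_mul_eq_one_left h
  have hyinv : y⁻¹ = y ^ (p - 1) := by
    have h : y ^ (p - 1) * y = 1 := by
      rw [← pow_succ, Nat.sub_add_cancel hp, hyp]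
    exact inv_eq_of_mul_eq_one_left h
  -- the normal form map
  set ext : (Fin (k + 1) → Fin p) → ℕ → ℕ :=
    fun b i => if h : i < k + 1 then (b ⟨i, h⟩ : ℕ) else 0 with hext
  set F : (Fin p × (Fin (k + 1) → Fin p)) → G :=
    fun d => x ^ (d.1 : ℕ) * sharW c (ext d.2) (k + 1) with hF
  set S : Set G := Set.range F with hS
  -- 1 ∈ S
  have mem1 : (1 : G) ∈ S := by
    refine ⟨(⟨0, hp⟩, fun _ => ⟨0, hp⟩), ?_⟩
    have h0 : ∀ i, i < k + 1 → ext (fun _ => (⟨0, hp⟩ : Fin p)) i = (fun _ => 0) i := by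
      intro i hi; simp [hext]
    rw [hF]
    simp only
    rw [sharW_congr (k + 1) h0, sharW_zero]
    simp
  -- S is closed under right multiplication by y
  have memy : ∀ s ∈ S, s * y ∈ S := by
    rintro s ⟨⟨a, b⟩, rfl⟩
    have hyW : y = sharW c (fun i => if i = 0 then 1 else 0) (k + 1) := by
      rw [sharW_delta, hc0]
    refine ⟨(a, fun i => ⟨(ext b i + (if (i : ℕ) = 0 then 1 else 0)) % p,
      Nat.mod_lt _ hp⟩), ?_⟩
    have e5 : (x ^ (a : ℕ) * sharW c (ext b) (k + 1)) * y =
        x ^ (a : ℕ) *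
          sharW c (fun i => (ext b i + (if i = 0 then 1 else 0)) % p) (k + 1) := by
      rw [mul_assoc, hyW, sharW_mul hcomm, sharW_mod hcp]
    rw [hF]
    simp only
    rw [e5]
    congr 1
    refine sharW_congr (k + 1) ?_
    intro i hi
    simp only [hext, dif_pos hi]
  -- S is closed under right multiplication by x⁻¹
  have memxi : ∀ s ∈ S, s * x⁻¹ ∈ S := by
    rintro s ⟨⟨a, b⟩, rfl⟩
    refine ⟨(⟨((a : ℕ) + (p - 1)) % p, Nat.mod_lt _ hp⟩,
      fun i => ⟨sharT (ext b) i % p, Nat.mod_lt _ hp⟩), ?_⟩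
    have key : x * sharW c (ext b) (k + 1) * x⁻¹ = sharW c (sharT (ext b)) (k + 1) := by
      rw [sharW_conj hconj hcomm (ext b) k, hck, one_pow, mul_one]
    have hsplit : x ^ (a : ℕ) * sharW c (ext b) (k + 1) * x⁻¹ =
        (x ^ (a : ℕ) * x⁻¹) * (x * sharW c (ext b) (k + 1) * x⁻¹) := by group
    have e4 : x ^ (a : ℕ) * sharW c (ext b) (k + 1) * x⁻¹ =
        x ^ (((a : ℕ) + (p - 1)) % p) *
          sharW c (fun i => sharT (ext b) i % p) (k + 1) := by
      rw [hsplit, key, hxinv, ← pow_add, sharW_mod hcp (sharT (ext b)),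
        pow_eq_pow_mod ((a : ℕ) + (p - 1)) hxp]
    rw [hF]
    simp only
    rw [e4]
    congr 1
    refine sharW_congr (k + 1) ?_
    intro i hi
    simp only [hext, dif_pos hi]
  -- the submonoid of elements which stabilize S on the right
  set K : Submonoid G :=
    { carrier := { g : G | ∀ s ∈ S, s * g ∈ S }
      one_mem' := fun s hs => by rwa [mul_one]
      mul_mem' := fun {g h} hg hh s hs => by
        rw [← mul_assoc]; exact hh _ (hg s hs) } with hK
  have hxiK : x⁻¹ ∈ K := memxi
  have hyK : y ∈ K := memy
  have hxK : x ∈ K := by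
    have : x = x⁻¹ ^ (p - 1) := by rw [inv_pow, ← hxinv, inv_inv]
    rw [this]
    exact pow_mem hxiK _
  have hyiK : y⁻¹ ∈ K := by
    rw [hyinv]
    exact pow_mem hyK _
  -- F is surjective
  have hsurj : Function.Surjective F := by
    intro g
    have hg : g ∈ K := hgen g K hxK hyK hxiK hyiK
    have := hg 1 mem1
    rwa [one_mul] at this
  have hcard := Nat.card_le_card_of_surjective F hsurj
  calc Nat.card G ≤ Nat.card (Fin p × (Fin (k + 1) → Fin p)) := hcard
    _ = p ^ (k + 2) := by
        simp [Nat.card_eq_fintype_card]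
        ring

end SharifiAux

theorem stmt_7 (p k : ℕ) (hp : p.Prime) (hk : 1 ≤ k) :
    Nat.card (PresentedGroup (sharifiRels p k)) ≤ p ^ (k + 2) := by
  set rels := sharifiRels p k with hrels
  set x : PresentedGroup rels := PresentedGroup.of true with hx
  set y : PresentedGroup rels := PresentedGroup.of false with hy
  have hone : ∀ r ∈ rels, PresentedGroup.mk rels r = 1 := fun r hr =>
    (QuotientGroup.eq_one_iff r).2 (Subgroup.subset_normalClosure hr)
  have hmapIC : ∀ n, PresentedGroup.mk rels
      (iterComm (FreeGroup.of true) (FreeGroup.of false) n) = iterComm x y n := by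
    intro n
    rw [map_iterComm (PresentedGroup.mk rels) _ _ n]
    rfl
  have hxp : x ^ p = 1 := by
    have := hone _ (Set.mem_union_left _ (Set.mem_insert _ _))
    rwa [map_pow] at this
  have hyp : y ^ p = 1 := by
    have := hone _ (Set.mem_union_left _
      (Set.mem_insert_of_mem _ (Set.mem_insert _ _)))
    rwa [map_pow] at this
  have hck : iterComm x y (k + 1) = 1 := by
    have := hone _ (Set.mem_union_left _
      (Set.mem_insert_of_mem _ (Set.mem_insert_of_mem _ rfl)))
    rwa [hmapIC] at this
  have hcip : ∀ i, 1 ≤ i → i ≤ k → iterComm x y i ^ p = 1 := by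
    intro i h1 h2
    have := hone _ (Set.mem_union_right _ ⟨i, h1, h2, Or.inl rfl⟩)
    rwa [map_pow, hmapIC] at this
  have hciy : ∀ i, 1 ≤ i → i ≤ k → ⁅iterComm x y i, y⁆ = 1 := by
    intro i h1 h2
    have := hone _ (Set.mem_union_right _ ⟨i, h1, h2, Or.inr rfl⟩)
    rwa [map_commutatorElement, hmapIC] at this
  refine sharifi_card_le p k hp.pos x y (iterComm x y) rfl (fun n => rfl)
    hxp hyp hcip hciy hck ?_
  intro g K h1 h2 h3 h4
  induction g using PresentedGroup.induction_on with
  | _ z =>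
    induction z using FreeGroup.induction_on with
    | C1 => rw [map_one]; exact one_mem K
    | of b => cases b <;> assumption
    | inv_of b _ =>
      rw [map_inv]
      cases b <;> assumption
    | mul u v hu hv =>
      rw [map_mul]
      exact mul_mem hu hv
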